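/- Let x1, x2, x3 in R^3 be pairwise at distance less than 2, and let p be a point lying on all three unit spheres S(x1), S(x2), S(x3). If x1, x2, x3 are not collinear, then there are exactly two points in S(x1) ∩ S(x2) ∩ S(x3) or exactly one (the latter occurring only when p lies in the affine plane spanned by x1, x2, x3); in particular S(x1) ∩ S(x2) ∩ S(x3) has at most two points. -/
import Mathlib
set_option maxHeartbeats 1000000

open scoped RealInnerProductSpace

private lemma norm_eq_one_of_sq (a : EuclideanSpace ℝ (Fin 3)) (h : ‖a‖^2 = 1) : ‖a‖ = 1 := by
  nlinarith [norm_nonneg a]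

/-- Three unit spheres in ℝ³ with non-collinear centers, pairwise at
distance less than 2, having a common point p, meet in exactly two points, or in
exactly one point, the latter occurring only when p lies in the affine plane spanned
by the centers; in particular the triple intersection has at most two points. -/
theorem three_unit_spheres_at_most_two_points
    (x1 x2 x3 p : EuclideanSpace ℝ (Fin 3))
    (hd12 : dist x1 x2 < 2) (hd13 : dist x1 x3 < 2) (hd23 : dist x2 x3 < 2)
    (hp1 : p ∈ Metric.sphere x1 1) (hp2 : p ∈ Metric.sphere x2 1)
    (hp3 : p ∈ Metric.sphere x3 1)
    (hcol : ¬ Collinear ℝ ({x1, x2, x3} : Set (EuclideanSpace ℝ (Fin 3)))) :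
    ((Metric.sphere x1 1 ∩ Metric.sphere x2 1 ∩ Metric.sphere x3 1).encard = 2 ∨
      ((Metric.sphere x1 1 ∩ Metric.sphere x2 1 ∩ Metric.sphere x3 1).encard = 1 ∧
        p ∈ affineSpan ℝ ({x1, x2, x3} : Set (EuclideanSpace ℝ (Fin 3))))) ∧
    (Metric.sphere x1 1 ∩ Metric.sphere x2 1 ∩ Metric.sphere x3 1).encard ≤ 2 := by
  classical
  set S : Set (EuclideanSpace ℝ (Fin 3)) :=
    Metric.sphere x1 1 ∩ Metric.sphere x2 1 ∩ Metric.sphere x3 1 with hSdef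
  have hmem : ∀ q : EuclideanSpace ℝ (Fin 3),
      q ∈ S ↔ ‖q - x1‖ = 1 ∧ ‖q - x2‖ = 1 ∧ ‖q - x3‖ = 1 := by
    intro q
    simp [hSdef, Metric.mem_sphere, dist_eq_norm, and_assoc]
  set V : Submodule ℝ (EuclideanSpace ℝ (Fin 3)) :=
    Submodule.span ℝ ({x2 - x1, x3 - x1} : Set (EuclideanSpace ℝ (Fin 3))) with hVdef
  have m2 : x2 - x1 ∈ V := Submodule.subset_span (by simp)
  have m3 : x3 - x1 ∈ V := Submodule.subset_span (by simp)
  have hmm : ∀ y, y ∈ ({x1,x2,x3}:Set (EuclideanSpace ℝ (Fin 3))) → y - x1 ∈ V := by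
    intro y hy
    simp only [Set.mem_insert_iff, Set.mem_singleton_iff] at hy
    rcases hy with rfl | rfl | rfl
    · simpa using V.zero_mem
    · exact m2
    · exact m3
  -- V equals the vector span
  have hVle : V ≤ vectorSpan ℝ ({x1, x2, x3} : Set (EuclideanSpace ℝ (Fin 3))) := by
    rw [hVdef, Submodule.span_le]
    rintro v (rfl | rfl)
    · simpa [vsub_eq_sub] using
        vsub_mem_vectorSpan ℝ (show x2 ∈ ({x1,x2,x3}:Set (EuclideanSpace ℝ (Fin 3))) by simp)
          (show x1 ∈ ({x1,x2,x3}:Set (EuclideanSpace ℝ (Fin 3))) by simp)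
    · simpa [vsub_eq_sub] using
        vsub_mem_vectorSpan ℝ (show x3 ∈ ({x1,x2,x3}:Set (EuclideanSpace ℝ (Fin 3))) by simp)
          (show x1 ∈ ({x1,x2,x3}:Set (EuclideanSpace ℝ (Fin 3))) by simp)
  have hleV : vectorSpan ℝ ({x1, x2, x3} : Set (EuclideanSpace ℝ (Fin 3))) ≤ V := by
    rw [vectorSpan_def, Submodule.span_le]
    rintro v ⟨a, ha, b, hb, rfl⟩
    have haa : a - x1 ∈ V := hmm a ha
    have hbb : b - x1 ∈ V := hmm b hb
    have hab : a -ᵥ b = (a - x1) - (b - x1) := by simp only [vsub_eq_sub]; abel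
    show a -ᵥ b ∈ V
    rw [hab]
    exact V.sub_mem haa hbb
  have hVeq : V = vectorSpan ℝ ({x1, x2, x3} : Set (EuclideanSpace ℝ (Fin 3))) :=
    le_antisymm hVle hleV
  have hfin3 : Module.finrank ℝ (EuclideanSpace ℝ (Fin 3)) = 3 := by simp
  have hV2 : Module.finrank ℝ V = 2 := by
    have hle2 : Module.finrank ℝ V ≤ 2 := by
      haveI : Fintype ↑({x2 - x1, x3 - x1} : Set (EuclideanSpace ℝ (Fin 3))) :=
        Set.Finite.fintype (by simp)
      refine (finrank_span_le_card _).trans ?_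
      rw [← Set.ncard_eq_toFinset_card']
      exact (Set.ncard_insert_le _ _).trans (by simp)
    have hge2 : 2 ≤ Module.finrank ℝ V := by
      by_contra h
      push_neg at h
      apply hcol
      rw [collinear_iff_finrank_le_one]
      have := Submodule.finrank_mono hleV
      omega
    omega
  have hVorth1 : Module.finrank ℝ (Vᗮ : Submodule ℝ (EuclideanSpace ℝ (Fin 3))) = 1 := by
    have := Submodule.finrank_add_finrank_orthogonal (K := V)
    rw [hV2, hfin3] at this
    omega
  obtain ⟨nv, hnv0, hnvgen⟩ := finrank_eq_one_iff'.mp hVorth1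
  set n : EuclideanSpace ℝ (Fin 3) := (nv : EuclideanSpace ℝ (Fin 3)) with hndef
  have hnV : n ∈ Vᗮ := nv.2
  have hn0 : n ≠ 0 := fun h => hnv0 (Subtype.ext h)
  have hnn : ‖n‖ ≠ 0 := norm_ne_zero_iff.mpr hn0
  have hgen : ∀ w : EuclideanSpace ℝ (Fin 3), w ∈ Vᗮ → ∃ c : ℝ, w = c • n := by
    intro w hw
    obtain ⟨c, hc⟩ := hnvgen ⟨w, hw⟩
    exact ⟨c, by simpa [hndef] using congrArg Subtype.val hc.symm⟩
  have hinner : ∀ i, i ∈ ({x1,x2,x3}:Set (EuclideanSpace ℝ (Fin 3))) →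
      ⟪n, p - i⟫ = ⟪n, p - x1⟫ := by
    intro i hi
    have h0 : ⟪i - x1, n⟫ = 0 := (Submodule.mem_orthogonal V n).mp hnV _ (hmm i hi)
    have h0' : ⟪n, i - x1⟫ = 0 := by rwa [real_inner_comm] at h0
    have hexp : ⟪n, p - i⟫ = ⟪n, p - x1⟫ - ⟪n, i - x1⟫ := by
      rw [← inner_sub_right]
      congr 1
      abel
    rw [hexp, h0', sub_zero]
  have hp1' : ‖p - x1‖ = 1 := by rw [← dist_eq_norm]; exact hp1
  have hp2' : ‖p - x2‖ = 1 := by rw [← dist_eq_norm]; exact hp2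
  have hp3' : ‖p - x3‖ = 1 := by rw [← dist_eq_norm]; exact hp3
  set t0 : ℝ := -(2 * ⟪n, p - x1⟫) / (‖n‖^2) with ht0def
  set p' : EuclideanSpace ℝ (Fin 3) := p + t0 • n with hp'def
  have hquad : ∀ (c : ℝ) (i : EuclideanSpace ℝ (Fin 3)), ‖(p + c • n) - i‖^2
      = ‖p - i‖^2 + 2 * c * ⟪n, p - i⟫ + c^2 * ‖n‖^2 := by
    intro c i
    have h : (p + c • n) - i = (p - i) + c • n := by abel
    rw [h, norm_add_sq_real, real_inner_smul_right, norm_smul]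
    rw [real_inner_comm]
    simp [mul_pow]
    ring
  have hp'mem : p' ∈ S := by
    rw [hmem]
    refine ⟨?_, ?_, ?_⟩ <;>
    · apply norm_eq_one_of_sq
      rw [hp'def, hquad]
      rw [hinner _ (by simp)]
      first
        | rw [hp1'] | rw [hp2'] | rw [hp3']
      rw [ht0def]
      field_simp
      ring
  have hpmem : p ∈ S := (hmem p).mpr ⟨hp1', hp2', hp3'⟩
  -- forward inclusion
  have hSsub : S ⊆ {p, p'} := by
    intro q hq
    rw [hmem] at hq
    obtain ⟨h1, h2, h3⟩ := hq
    have key : ∀ i : EuclideanSpace ℝ (Fin 3), ‖q - i‖ = 1 → ‖p - i‖ = 1 →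
        ⟪q - p, i - x1⟫ = 0 := by
      intro i hqi hpi
      have a1 := norm_sub_sq_real q i
      have a2 := norm_sub_sq_real q x1
      have a3 := norm_sub_sq_real p i
      have a4 := norm_sub_sq_real p x1
      rw [hqi] at a1; rw [h1] at a2; rw [hpi] at a3; rw [hp1'] at a4
      simp only [inner_sub_left, inner_sub_right]
      linarith [a1, a2, a3, a4]
    have horth : q - p ∈ Vᗮ := by
      rw [Submodule.mem_orthogonal']
      intro u hu
      induction hu using Submodule.span_induction with
      | mem u hu =>
          rcases hu with rfl | rfl
          · exact key x2 h2 hp2'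
          · exact key x3 h3 hp3'
      | zero => simp
      | add u v _ _ hu hv => rw [inner_add_right, hu, hv]; ring
      | smul c u _ hu => rw [real_inner_smul_right, hu]; ring
    obtain ⟨c, hc⟩ := hgen _ horth
    have hq1 : q = p + c • n := by rw [← hc]; abel
    have hqq := hquad c x1
    rw [← hq1] at hqq
    rw [h1, hp1'] at hqq
    have hfac : c * (2 * ⟪n, p - x1⟫ + c * ‖n‖^2) = 0 := by nlinarith [hqq]
    rcases mul_eq_zero.mp hfac with hc0 | hc0
    · left
      rw [hq1, hc0]
      simp
    · right
      have hct : c = t0 := by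
        rw [ht0def, eq_div_iff (pow_ne_zero 2 hnn)]
        linarith
      rw [hq1, hct, hp'def]
      exact rfl
  have hSeq : S = {p, p'} := by
    refine Set.Subset.antisymm hSsub ?_
    rintro q (rfl | rfl)
    · exact hpmem
    · exact hp'mem
  by_cases h0 : ⟪n, p - x1⟫ = 0
  · -- one point, p in the plane
    have ht0 : t0 = 0 := by rw [ht0def, h0]; simp
    have hpp' : p' = p := by rw [hp'def, ht0]; simp
    have hSone : S = {p} := by rw [hSeq, hpp', Set.pair_eq_singleton]
    have hpx : p - x1 ∈ V := by
      rw [← (Submodule.orthogonal_orthogonal V)]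
      rw [Submodule.mem_orthogonal]
      intro u hu
      obtain ⟨c, rfl⟩ := hgen u hu
      rw [real_inner_smul_left, h0, mul_zero]
    have hx1 : x1 ∈ affineSpan ℝ ({x1,x2,x3}:Set (EuclideanSpace ℝ (Fin 3))) :=
      mem_affineSpan ℝ (by simp)
    have hpa : p ∈ affineSpan ℝ ({x1,x2,x3}:Set (EuclideanSpace ℝ (Fin 3))) := by
      have hd : p - x1 ∈ (affineSpan ℝ ({x1,x2,x3}:Set (EuclideanSpace ℝ (Fin 3)))).direction := by
        rw [direction_affineSpan, ← hVeq]; exact hpx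
      have := AffineSubspace.vadd_mem_of_mem_direction hd hx1
      simpa [vadd_eq_add, sub_add_cancel] using this
    rw [hSone]
    simp [hpa]
  · -- two points
    have ht0 : t0 ≠ 0 := by
      rw [ht0def]
      intro h
      apply h0
      rcases div_eq_zero_iff.mp h with h' | h'
      · linarith
      · exact absurd h' (pow_ne_zero 2 hnn)
    have hne : p ≠ p' := by
      rw [hp'def]
      intro h
      have : t0 • n = 0 := by
        have := congrArg (fun z => z - p) h
        simpa using this.symm
      rcases smul_eq_zero.mp this with h' | h'
      · exact ht0 h'
      · exact hn0 h'
    rw [hSeq]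
    rw [Set.encard_pair hne]
    simp
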